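/- (Claim in the proof of Theorem 1.5: surjections can absorb automorphisms of the target.) Let K be a field, let V and W be K-vector spaces, let A : V →ₗ[K] W be a surjective linear map, and let g : W ≃ₗ[K] W be a linear automorphism of W. Then there exists a linear automorphism h : V ≃ₗ[K] V such that A ∘ h = g ∘ A as linear maps from V to W, i.e. A (h v) = g (A v) for all v ∈ V. -/

import Mathlib

/-- (Claim in the proof of Theorem 1.5: surjections absorb automorphisms of the target.)
For a surjective linear map `A : V →ₗ[K] W` and an automorphism `g` of `W`, there is
an automorphism `h` of `V` with `A ∘ h = g ∘ A`. -/
theorem surjective_absorbs_automorphism (K : Type*) [Field K]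
    (V W : Type*) [AddCommGroup V] [Module K V] [AddCommGroup W] [Module K W]
    (A : V →ₗ[K] W) (hA : Function.Surjective A) (g : W ≃ₗ[K] W) :
    ∃ h : V ≃ₗ[K] V, ∀ v : V, A (h v) = g (A v) := by
  obtain ⟨s, hs⟩ := A.exists_rightInverse_of_surjective (LinearMap.range_eq_top.2 hA)
  have hs' : ∀ w, A (s w) = w := fun w => LinearMap.congr_fun hs w
  -- equivalence V ≃ ker A × W
  let e : V ≃ₗ[K] (LinearMap.ker A) × W :=
    { toFun := fun v => (⟨v - s (A v), by simp [hs']⟩, A v)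
      map_add' := fun x y => by ext <;> simp <;> abel
      map_smul' := fun c x => by ext <;> simp [smul_sub]
      invFun := fun p => p.1.1 + s p.2
      left_inv := fun v => by simp
      right_inv := fun p => by
        ext
        · have := p.1.2
          simp at this
          simp [hs', this]
        · simp [hs', LinearMap.mem_ker.1 p.1.2] }
  refine ⟨e.trans ((LinearEquiv.refl K (LinearMap.ker A)).prodCongr g |>.trans e.symm), fun v => by
    simp [e, hs']⟩
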